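/- For the unitaries U₁(p,x,y) = δ_{0,p}e^{2πix} and U₂(p,x,y) = δ_{0,p}e^{2πiy} in the algebra D₀, the pairings with the 1-cocycles φⱼ(a₀,a₁) = τ(a₀∂ⱼ(a₁)) satisfy τ(Uᵢ* ∂ⱼ(Uᵢ)) = -2πi·δ_{i,j} for i ∈ {1,2}, j ∈ {1,2,3}. -/
import Mathlib


open Complex Real

noncomputable def conv (μ ν : ℝ) (F G : ℤ → ℝ → ℝ → ℂ) : ℤ → ℝ → ℝ → ℂ :=
  fun p x y => ∑' q : ℤ, F q x y * G (p - q) (x - 2 * q * μ) (y - 2 * q * ν)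

/-- The involution `F*(p,x,y) = conj F(-p, x-2pμ, y-2pν)`. -/
noncomputable def inv0 (μ ν : ℝ) (F : ℤ → ℝ → ℝ → ℂ) : ℤ → ℝ → ℝ → ℂ :=
  fun p x y => (starRingEnd ℂ) (F (-p) (x - 2 * p * μ) (y - 2 * p * ν))

noncomputable def qhmTrace (F : ℤ → ℝ → ℝ → ℂ) : ℂ :=
  ∫ x in (0:ℝ)..1, ∫ y in (0:ℝ)..1, F 0 x y

/-- The derivations `∂₁, ∂₂, ∂₃`. -/
noncomputable def del (c : ℤ) : Fin 3 → (ℤ → ℝ → ℝ → ℂ) → (ℤ → ℝ → ℝ → ℂ)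
  | 0 => fun F p x y => -deriv (fun x' => F p x' y) x
  | 1 => fun F p x y =>
      -deriv (fun y' => F p x y') y + (2 * π * I * p * c * x) * F p x y
  | 2 => fun F p x y => (2 * π * I * p) * F p x y

/-- The unitaries `U₁(p,x,y) = δ_{0,p}e^{2πix}` and `U₂(p,x,y) = δ_{0,p}e^{2πiy}`. -/
noncomputable def Ugen : Fin 2 → (ℤ → ℝ → ℝ → ℂ)
  | 0 => fun p x _ => if p = 0 then Complex.exp (2 * π * I * x) else 0
  | 1 => fun p _ y => if p = 0 then Complex.exp (2 * π * I * y) else 0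

lemma exp_deriv' (a : ℂ) (t : ℝ) :
    deriv (fun x : ℝ => Complex.exp (a * x)) t = a * Complex.exp (a * t) := by
  have h : HasDerivAt (fun x : ℝ => a * (x : ℂ)) a t := by
    simpa using (Complex.ofRealCLM.hasDerivAt (x := t)).const_mul a
  simpa [mul_comm] using h.cexp.deriv

lemma conv0 (μ ν : ℝ) (F G : ℤ → ℝ → ℝ → ℂ)
    (hF : ∀ q : ℤ, q ≠ 0 → ∀ x y, F q x y = 0) (x y : ℝ) :
    conv μ ν F G 0 x y = F 0 x y * G 0 x y := by
  rw [conv, tsum_eq_single 0]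
  · simp
  · intro q hq; rw [hF q hq, zero_mul]

/-- `τ(Uᵢ* ∂ⱼ(Uᵢ)) = -2πi·δ_{i,j}` for `i ∈ {1,2}`, `j ∈ {1,2,3}`. -/
theorem stmt10 (c : ℤ) (μ ν : ℝ) (i : Fin 2) (j : Fin 3) :
    qhmTrace (conv μ ν (inv0 μ ν (Ugen i)) (del c j (Ugen i)))
      = if (j : ℕ) = (i : ℕ) then -(2 * π * I) else 0 := by
  have hU : ∀ i : Fin 2, ∀ q : ℤ, q ≠ 0 → ∀ x y, inv0 μ ν (Ugen i) q x y = 0 := by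
    intro i q hq x y
    fin_cases i <;> simp [inv0, Ugen, neg_eq_zero, hq]
  have hconj : ∀ t : ℝ, (starRingEnd ℂ) (Complex.exp (2 * π * I * t)) *
      (Complex.exp (2 * π * I * t)) = 1 := by
    intro t
    rw [← Complex.exp_conj, ← Complex.exp_add]
    simp [map_ofNat]
  fin_cases i <;> fin_cases j <;>
    (rw [qhmTrace];
     simp only [conv0 μ ν _ _ (hU _)];
     simp only [inv0, del, Ugen, neg_zero, Int.cast_zero, mul_zero, zero_mul, if_true,
       eq_self_iff_true, sub_zero, zero_sub];
     norm_num)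
  all_goals
      simp only [exp_deriv']
      have h2 : ∀ t : ℝ, (starRingEnd ℂ) (Complex.exp (2 * ↑π * I * ↑t)) *
          (2 * ↑π * I * Complex.exp (2 * ↑π * I * ↑t)) = 2 * ↑π * I := by
        intro t
        calc (starRingEnd ℂ) (Complex.exp (2 * ↑π * I * ↑t)) *
            (2 * ↑π * I * Complex.exp (2 * ↑π * I * ↑t))
            = 2 * ↑π * I * ((starRingEnd ℂ) (Complex.exp (2 * ↑π * I * ↑t)) *
              Complex.exp (2 * ↑π * I * ↑t)) := by ring
          _ = 2 * ↑π * I := by rw [hconj, mul_one]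
      simp only [h2, intervalIntegral.integral_const, sub_zero, one_smul]
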